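/- Let R be a complete discrete valuation ring with uniformizer π, such that n is a positive integer invertible in R and R contains a primitive n-th root of unity. Let a, b be positive integers with gcd(a, n) = gcd(b, n) = 1, and let r be an integer with gcd(r, n) = 1 and n dividing a + r·b. Let C = R[[z,w]]/(π − z^{a}·w^{b}) and let ψ : B = R[[s,t]]/(π^{n} − s^{a}·t^{b}) → C be the R-algebra homomorphism determined by s ↦ z^{n}, t ↦ w^{n}. If e₁, e₂ are nonnegative integers such that n divides e₁ + r·e₂, then the monomial z^{e₁}·w^{e₂} lies in the fraction field of the subring ψ(B) of C; that is, there exist β₁, β₂ ∈ B with ψ(β₂) ≠ 0 such that ψ(β₂)·z^{e₁}·w^{e₂} = ψ(β₁) in C. -/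

import Mathlib

/-- The ideal `(π^{m} − z^{a}·w^{b})` of `R[[z,w]] = MvPowerSeries (Fin 2) R`
(with `z = X 0`, `w = X 1`). -/
noncomputable abbrev stmt8.I (R : Type) [CommRing R] (π : R) (m a b : ℕ) :
    Ideal (MvPowerSeries (Fin 2) R) :=
  Ideal.span {(MvPowerSeries.C (σ := Fin 2) (R := R) π) ^ m
    - (MvPowerSeries.X (0 : Fin 2)) ^ a * (MvPowerSeries.X (1 : Fin 2)) ^ b}

/-- The quotient ring `R[[z,w]]/(π^{m} − z^{a}·w^{b})`. -/
abbrev stmt8.Q (R : Type) [CommRing R] (π : R) (m a b : ℕ) : Type :=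
  MvPowerSeries (Fin 2) R ⧸ stmt8.I R π m a b

namespace stmt8aux

open MvPowerSeries Finsupp

lemma fin2_decomp (d : Fin 2 →₀ ℕ) :
    d = Finsupp.single 0 (d 0) + Finsupp.single 1 (d 1) := by
  ext i
  fin_cases i <;> simp [Finsupp.single_apply]

lemma monoX (R : Type) [CommRing R] (a b : ℕ) :
    (MvPowerSeries.X (0 : Fin 2) : MvPowerSeries (Fin 2) R) ^ a
      * (MvPowerSeries.X (1 : Fin 2)) ^ b
      = MvPowerSeries.monomial (R := R) (Finsupp.single 0 a + Finsupp.single 1 b) 1 := by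
  rw [MvPowerSeries.X_pow_eq, MvPowerSeries.X_pow_eq, MvPowerSeries.monomial_mul_monomial,
    one_mul]

/-- No power `π^N` lies in the ideal `(π − z^a w^b)`. -/
lemma not_mem (R : Type) [CommRing R] [IsDomain R] (π : R) (hπ : Irreducible π)
    (a b : ℕ) (ha : 0 < a) (N : ℕ) :
    (MvPowerSeries.C (σ := Fin 2) (R := R) π) ^ N ∉ stmt8.I R π 1 a b := by
  intro h
  rw [stmt8.I, Ideal.mem_span_singleton, pow_one] at h
  obtain ⟨f, hf⟩ := h
  set D : ℕ → (Fin 2 →₀ ℕ) := fun k => Finsupp.single 0 (a * k) + Finsupp.single 1 (b * k)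
    with hD
  have hDadd : ∀ k, D (k + 1)
      = (Finsupp.single 0 a + Finsupp.single 1 b) + D k := by
    intro k
    simp only [hD]
    rw [Nat.mul_add, Nat.mul_add, Nat.mul_one, Nat.mul_one, Finsupp.single_add,
      Finsupp.single_add]
    abel
  have hCN : ∀ d : Fin 2 →₀ ℕ,
      MvPowerSeries.coeff (R := R) d ((MvPowerSeries.C (σ := Fin 2) (R := R) π) ^ N)
        = if d = 0 then π ^ N else 0 := by
    intro d
    rw [← map_pow, MvPowerSeries.coeff_C]
  have hcoeff : ∀ d : Fin 2 →₀ ℕ,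
      MvPowerSeries.coeff (R := R) d ((MvPowerSeries.C (σ := Fin 2) (R := R) π) ^ N)
        = π * MvPowerSeries.coeff (R := R) d f
          - MvPowerSeries.coeff (R := R) d
              ((MvPowerSeries.X (0 : Fin 2)) ^ a * (MvPowerSeries.X (1 : Fin 2)) ^ b * f) := by
    intro d
    rw [hf, sub_mul, map_sub, MvPowerSeries.coeff_C_mul]
  have key : ∀ k : ℕ, π ^ N = π ^ (k + 1) * MvPowerSeries.coeff (R := R) (D k) f := by
    intro k
    induction k with
    | zero =>
      have h0 := hcoeff (D 0)
      have hD0 : D 0 = 0 := by simp [hD]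
      rw [hD0] at h0
      rw [hCN 0, if_pos rfl] at h0
      rw [monoX R a b] at h0
      have hne : ¬ (Finsupp.single (0 : Fin 2) a + Finsupp.single 1 b) ≤ (0 : Fin 2 →₀ ℕ) := by
        intro hle
        have := hle 0
        simp [Finsupp.single_apply] at this
        omega
      rw [MvPowerSeries.coeff_monomial_mul, if_neg hne] at h0
      rw [hD0, pow_one]
      rw [h0, sub_zero]
    | succ k ih =>
      have h1 := hcoeff (D (k + 1))
      have hne0 : D (k + 1) ≠ 0 := by
        intro h
        have h' := congrArg (fun g : Fin 2 →₀ ℕ => g 0) h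
        simp only [hD, Finsupp.add_apply, Finsupp.single_apply, Finsupp.coe_zero,
          Pi.zero_apply] at h'
        simp at h'
        exact ha.ne' h'
      rw [hCN (D (k + 1)), if_neg hne0, monoX R a b, hDadd k,
        MvPowerSeries.coeff_add_monomial_mul, one_mul] at h1
      have h2 : MvPowerSeries.coeff (R := R) (D k) f
          = π * MvPowerSeries.coeff (R := R) (D (k + 1)) f := by
        rw [hDadd k]; linear_combination h1
      rw [ih, h2]
      ring
  have hNN := key N
  have hπ0 : π ^ N ≠ 0 := pow_ne_zero _ hπ.ne_zero
  have : (1 : R) = π * MvPowerSeries.coeff (R := R) (D N) f := by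
    have h3 : π ^ N * 1 = π ^ N * (π * MvPowerSeries.coeff (R := R) (D N) f) := by
      linear_combination hNN
    exact mul_left_cancel₀ hπ0 h3
  exact hπ.not_isUnit (IsUnit.of_mul_eq_one _ this.symm)

/-- `Φ` sends `X 0` to `X 0 ^ n`. -/
lemma PhiX0 (R : Type) [CommRing R] (n : ℕ) (hn : 0 < n)
    (Φ : MvPowerSeries (Fin 2) R →ₐ[R] MvPowerSeries (Fin 2) R)
    (hΦ : ∀ (f : MvPowerSeries (Fin 2) R) (d : Fin 2 →₀ ℕ),
      MvPowerSeries.coeff (R := R) d (Φ f) =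
        if n ∣ d 0 ∧ n ∣ d 1 then
          MvPowerSeries.coeff (R := R)
            (Finsupp.single 0 (d 0 / n) + Finsupp.single 1 (d 1 / n)) f
        else 0) :
    Φ (MvPowerSeries.X (0 : Fin 2)) = (MvPowerSeries.X (0 : Fin 2)) ^ n := by
  classical
  apply MvPowerSeries.ext
  intro d
  rw [hΦ, MvPowerSeries.coeff_X_pow]
  by_cases hd : d = Finsupp.single 0 n
  · subst hd
    rw [if_pos rfl]
    have h0 : (Finsupp.single (0 : Fin 2) n) 0 = n := by simp
    have h1 : (Finsupp.single (0 : Fin 2) n) 1 = 0 := by simp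
    have hdiv : n ∣ (Finsupp.single (0 : Fin 2) n) 0 ∧ n ∣ (Finsupp.single (0 : Fin 2) n) 1 := by
      rw [h0, h1]; exact ⟨dvd_refl n, dvd_zero n⟩
    rw [if_pos hdiv]
    rw [h0, h1, Nat.div_self hn, Nat.zero_div, Finsupp.single_zero, add_zero,
      MvPowerSeries.coeff_X, if_pos rfl]
  · rw [if_neg hd]
    split_ifs with hdv
    · obtain ⟨h0, h1⟩ := hdv
      rw [MvPowerSeries.coeff_X, if_neg]
      intro heq
      have hv0 := congrArg (fun g : Fin 2 →₀ ℕ => g 0) heq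
      have hv1 := congrArg (fun g : Fin 2 →₀ ℕ => g 1) heq
      simp [Finsupp.single_apply] at hv0 hv1
      have hd0 : d 0 = n := by
        have := Nat.div_mul_cancel h0
        rw [hv0, one_mul] at this
        omega
      have hd1 : d 1 = 0 := by
        have := Nat.div_mul_cancel h1
        rcases hv1 with h | h
        exacts [absurd h hn.ne', Nat.eq_zero_of_dvd_of_lt h1 h]
      apply hd
      rw [fin2_decomp d, hd0, hd1, Finsupp.single_zero, add_zero]
    · rfl

/-- `Φ` sends `X 1` to `X 1 ^ n`. -/
lemma PhiX1 (R : Type) [CommRing R] (n : ℕ) (hn : 0 < n)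
    (Φ : MvPowerSeries (Fin 2) R →ₐ[R] MvPowerSeries (Fin 2) R)
    (hΦ : ∀ (f : MvPowerSeries (Fin 2) R) (d : Fin 2 →₀ ℕ),
      MvPowerSeries.coeff (R := R) d (Φ f) =
        if n ∣ d 0 ∧ n ∣ d 1 then
          MvPowerSeries.coeff (R := R)
            (Finsupp.single 0 (d 0 / n) + Finsupp.single 1 (d 1 / n)) f
        else 0) :
    Φ (MvPowerSeries.X (1 : Fin 2)) = (MvPowerSeries.X (1 : Fin 2)) ^ n := by
  classical
  apply MvPowerSeries.ext
  intro d
  rw [hΦ, MvPowerSeries.coeff_X_pow]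
  by_cases hd : d = Finsupp.single 1 n
  · subst hd
    rw [if_pos rfl]
    have h0 : (Finsupp.single (1 : Fin 2) n) 0 = 0 := by simp
    have h1 : (Finsupp.single (1 : Fin 2) n) 1 = n := by simp
    have hdiv : n ∣ (Finsupp.single (1 : Fin 2) n) 0 ∧ n ∣ (Finsupp.single (1 : Fin 2) n) 1 := by
      rw [h0, h1]; exact ⟨dvd_zero n, dvd_refl n⟩
    rw [if_pos hdiv]
    rw [h0, h1, Nat.div_self hn, Nat.zero_div, Finsupp.single_zero, zero_add,
      MvPowerSeries.coeff_X, if_pos rfl]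
  · rw [if_neg hd]
    split_ifs with hdv
    · obtain ⟨h0, h1⟩ := hdv
      rw [MvPowerSeries.coeff_X, if_neg]
      intro heq
      have hv0 := congrArg (fun g : Fin 2 →₀ ℕ => g 0) heq
      have hv1 := congrArg (fun g : Fin 2 →₀ ℕ => g 1) heq
      simp [Finsupp.single_apply] at hv0 hv1
      have hd1 : d 1 = n := by
        have := Nat.div_mul_cancel h1
        rw [hv1, one_mul] at this
        omega
      have hd0 : d 0 = 0 := by
        have := Nat.div_mul_cancel h0
        rcases hv0 with h | h
        exacts [absurd h hn.ne', Nat.eq_zero_of_dvd_of_lt h0 h]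
      apply hd
      rw [fin2_decomp d, hd0, hd1, Finsupp.single_zero, zero_add]
    · rfl

end stmt8aux

/-- Let `R` be a complete discrete valuation ring with uniformizer `π`,
such that `n` is a positive integer invertible in `R` and `R` contains a primitive
`n`-th root of unity.  Let `a, b` be positive integers with `gcd(a,n) = gcd(b,n) = 1`,
and let `r` be an integer with `gcd(r,n) = 1` and `n ∣ a + r·b`.  Let
`C = R[[z,w]]/(π − z^a·w^b)` and let `ψ : B = R[[s,t]]/(π^n − s^a·t^b) → C` be the
`R`-algebra homomorphism determined by `s ↦ z^n`, `t ↦ w^n` (encoded by the coefficient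
characterization of the underlying substitution `Φ` and compatibility with the quotient
maps).  If `e₁, e₂` are nonnegative integers such that `n ∣ e₁ + r·e₂`, then the
monomial `z^{e₁}·w^{e₂}` lies in the fraction field of the subring `ψ(B)` of `C`; that
is, there exist `β₁, β₂ ∈ B` with `ψ(β₂) ≠ 0` such that
`ψ(β₂)·z^{e₁}·w^{e₂} = ψ(β₁)` in `C`. -/
theorem stmt_8
    (R : Type) [CommRing R] [IsDomain R] [IsDiscreteValuationRing R]
    [IsAdicComplete (IsLocalRing.maximalIdeal R) R]
    (π : R) (hπ : Irreducible π)
    (n : ℕ) (hn : 0 < n) (hunit : IsUnit (n : R))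
    (hroot : ∃ ζ : R, IsPrimitiveRoot ζ n)
    (a b : ℕ) (ha : 0 < a) (hb : 0 < b)
    (han : Nat.gcd a n = 1) (hbn : Nat.gcd b n = 1)
    (r : ℤ) (hrn : Int.gcd r n = 1) (hdvd : (n : ℤ) ∣ (a : ℤ) + r * (b : ℤ))
    (Φ : MvPowerSeries (Fin 2) R →ₐ[R] MvPowerSeries (Fin 2) R)
    (hΦ : ∀ (f : MvPowerSeries (Fin 2) R) (d : Fin 2 →₀ ℕ),
      MvPowerSeries.coeff (R := R) d (Φ f) =
        if n ∣ d 0 ∧ n ∣ d 1 then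
          MvPowerSeries.coeff (R := R)
            (Finsupp.single 0 (d 0 / n) + Finsupp.single 1 (d 1 / n)) f
        else 0)
    (ψ : stmt8.Q R π n a b →+* stmt8.Q R π 1 a b)
    (hψ : ∀ f : MvPowerSeries (Fin 2) R,
      ψ (Ideal.Quotient.mk (stmt8.I R π n a b) f)
        = Ideal.Quotient.mk (stmt8.I R π 1 a b) (Φ f))
    (e₁ e₂ : ℕ) (he : (n : ℤ) ∣ (e₁ : ℤ) + r * (e₂ : ℤ)) :
    ∃ β₁ β₂ : stmt8.Q R π n a b, ψ β₂ ≠ 0 ∧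
      ψ β₂ * (Ideal.Quotient.mk (stmt8.I R π 1 a b) (MvPowerSeries.X (0 : Fin 2))) ^ e₁
           * (Ideal.Quotient.mk (stmt8.I R π 1 a b) (MvPowerSeries.X (1 : Fin 2))) ^ e₂
        = ψ β₁ := by
  classical
  haveI : NeZero n := ⟨hn.ne'⟩
  -- the basic relation `π = z^a w^b` in `C`
  have hrel : Ideal.Quotient.mk (stmt8.I R π 1 a b) (MvPowerSeries.C (σ := Fin 2) (R := R) π)
      = (Ideal.Quotient.mk (stmt8.I R π 1 a b) (MvPowerSeries.X (0 : Fin 2))) ^ a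
        * (Ideal.Quotient.mk (stmt8.I R π 1 a b) (MvPowerSeries.X (1 : Fin 2))) ^ b := by
    have hmem : (MvPowerSeries.C (σ := Fin 2) (R := R) π) ^ 1
        - (MvPowerSeries.X (0 : Fin 2)) ^ a * (MvPowerSeries.X (1 : Fin 2)) ^ b
        ∈ stmt8.I R π 1 a b := Ideal.subset_span rfl
    have h := Ideal.Quotient.eq_zero_iff_mem.mpr hmem
    rw [map_sub, map_pow, map_mul, map_pow, map_pow, sub_eq_zero, pow_one] at h
    exact h
  -- Φ fixes constants and sends X i to X i ^ n
  have hΦC : Φ (MvPowerSeries.C (σ := Fin 2) (R := R) π) = MvPowerSeries.C (σ := Fin 2) (R := R) π := by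
    rw [MvPowerSeries.c_eq_algebraMap]
    exact Φ.commutes π
  have hΦ0 := stmt8aux.PhiX0 R n hn Φ hΦ
  have hΦ1 := stmt8aux.PhiX1 R n hn Φ hΦ
  -- number theory: choose k₀ < n with a k₀ ≡ e₁ and b k₀ ≡ e₂ (mod n)
  have haU : IsUnit ((a : ℕ) : ZMod n) := (ZMod.isUnit_iff_coprime a n).mpr han
  set k₀ : ℕ := (((a : ZMod n))⁻¹ * (e₁ : ZMod n)).val with hk₀
  have hk₀lt : k₀ < n := ZMod.val_lt _
  have hcast : ((k₀ : ℕ) : ZMod n) = ((a : ZMod n))⁻¹ * (e₁ : ZMod n) := by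
    simp [hk₀, ZMod.natCast_val, ZMod.cast_id]
  have hak : (a : ZMod n) * (k₀ : ZMod n) = (e₁ : ZMod n) := by
    rw [hcast, ← mul_assoc, ZMod.mul_inv_of_unit _ haU, one_mul]
  have hab' : (a : ZMod n) = -((r : ℤ) : ZMod n) * (b : ZMod n) := by
    have h := (ZMod.intCast_zmod_eq_zero_iff_dvd ((a : ℤ) + r * b) n).mpr hdvd
    push_cast at h
    linear_combination h
  have he1' : (e₁ : ZMod n) = -((r : ℤ) : ZMod n) * (e₂ : ZMod n) := by
    have h := (ZMod.intCast_zmod_eq_zero_iff_dvd ((e₁ : ℤ) + r * e₂) n).mpr he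
    push_cast at h
    linear_combination h
  have hbk : (b : ZMod n) * (k₀ : ZMod n) = (e₂ : ZMod n) := by
    apply haU.mul_left_cancel
    linear_combination (b : ZMod n) * hak + (b : ZMod n) * he1' - (e₂ : ZMod n) * hab'
  -- the exponents i₁, j₁
  have hle1 : a * k₀ ≤ e₁ + a * n :=
    le_trans (Nat.mul_le_mul_left a hk₀lt.le) (Nat.le_add_left _ _)
  have hle2 : b * k₀ ≤ e₂ + b * n :=
    le_trans (Nat.mul_le_mul_left b hk₀lt.le) (Nat.le_add_left _ _)
  have hdvd1 : n ∣ (e₁ + a * n - a * k₀) := by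
    have hmod : ((a * k₀ : ℕ) : ZMod n) = ((e₁ : ℕ) : ZMod n) := by push_cast; exact hak
    obtain ⟨c, hc⟩ := ((ZMod.natCast_eq_natCast_iff _ _ _).mp hmod).dvd
    zify [hle1]
    exact ⟨c + a, by push_cast at hc ⊢; linear_combination hc⟩
  have hdvd2 : n ∣ (e₂ + b * n - b * k₀) := by
    have hmod : ((b * k₀ : ℕ) : ZMod n) = ((e₂ : ℕ) : ZMod n) := by push_cast; exact hbk
    obtain ⟨c, hc⟩ := ((ZMod.natCast_eq_natCast_iff _ _ _).mp hmod).dvd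
    zify [hle2]
    exact ⟨c + b, by push_cast at hc ⊢; linear_combination hc⟩
  obtain ⟨i₁, hi₁⟩ := hdvd1
  obtain ⟨j₁, hj₁⟩ := hdvd2
  have E1 : a * k₀ + n * i₁ = a * n + e₁ := by
    rw [← hi₁, Nat.add_sub_cancel' hle1, Nat.add_comm]
  have E2 : b * k₀ + n * j₁ = b * n + e₂ := by
    rw [← hj₁, Nat.add_sub_cancel' hle2, Nat.add_comm]
  -- the witnesses
  refine ⟨Ideal.Quotient.mk (stmt8.I R π n a b)
      ((MvPowerSeries.C (σ := Fin 2) (R := R) π) ^ k₀ * (MvPowerSeries.X (0 : Fin 2)) ^ i₁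
        * (MvPowerSeries.X (1 : Fin 2)) ^ j₁),
    Ideal.Quotient.mk (stmt8.I R π n a b) ((MvPowerSeries.C (σ := Fin 2) (R := R) π) ^ n), ?_, ?_⟩
  · rw [hψ, map_pow, hΦC]
    intro h0
    exact stmt8aux.not_mem R π hπ a b ha n (Ideal.Quotient.eq_zero_iff_mem.mp h0)
  · rw [hψ, hψ]
    simp only [map_mul, map_pow, hΦC, hΦ0, hΦ1]
    rw [hrel]
    set x := Ideal.Quotient.mk (stmt8.I R π 1 a b) (MvPowerSeries.X (0 : Fin 2)) with hx
    set y := Ideal.Quotient.mk (stmt8.I R π 1 a b) (MvPowerSeries.X (1 : Fin 2)) with hy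
    calc (x ^ a * y ^ b) ^ n * x ^ e₁ * y ^ e₂
        = x ^ (a * n + e₁) * y ^ (b * n + e₂) := by
          rw [mul_pow, ← pow_mul, ← pow_mul, pow_add, pow_add]; ring
      _ = x ^ (a * k₀ + n * i₁) * y ^ (b * k₀ + n * j₁) := by rw [E1, E2]
      _ = (x ^ a * y ^ b) ^ k₀ * (x ^ n) ^ i₁ * (y ^ n) ^ j₁ := by
          rw [mul_pow, ← pow_mul, ← pow_mul, ← pow_mul, ← pow_mul, pow_add, pow_add]; ring
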